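/- The matroid Q₆ is not representable over GF(3): there is no matrix M : Matrix (Fin 3) (Fin 6) (ZMod 3) whose column matroid is isomorphic to the column matroid of B₁ = !![1,0,0,1,0,1; 0,1,0,1,1,3; 0,0,1,0,1,1] over ZMod 5; that is, there are no such M and bijection σ : Fin 6 ≃ Fin 6 with: for every S ⊆ Fin 6, S is independent in M (over ZMod 3) iff σ '' S is independent in B₁ (over ZMod 5). -/

import Mathlib

/-- Two matrices are geometrically equivalent if one is obtained from the other by
elementary row operations (an invertible matrix `Q`), column scaling (an invertible
diagonal matrix), and column permutations (a permutation matrix). -/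
def GeomEquiv {F : Type*} [Field F] {r n : ℕ}
    (A A' : Matrix (Fin r) (Fin n) F) : Prop :=
  ∃ (Q : Matrix (Fin r) (Fin r) F) (d : Fin n → F) (σ : Equiv.Perm (Fin n)),
    IsUnit Q ∧ (∀ j, d j ≠ 0) ∧
    A' = Q * A * Matrix.diagonal d * σ.permMatrix F

/-- Two matrices are projectively equivalent if one is obtained from the other by
elementary row operations and column scaling. -/
def ProjEquiv {F : Type*} [Field F] {r n : ℕ}
    (A A' : Matrix (Fin r) (Fin n) F) : Prop :=
  ∃ (Q : Matrix (Fin r) (Fin r) F) (d : Fin n → F),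
    IsUnit Q ∧ (∀ j, d j ≠ 0) ∧ A' = Q * A * Matrix.diagonal d

/-- A set `S` of column indices is independent in `A` if the corresponding columns
of `A` are linearly independent. -/
def Indep {F : Type*} [Field F] {r n : ℕ}
    (A : Matrix (Fin r) (Fin n) F) (S : Set (Fin n)) : Prop :=
  LinearIndependent F (fun s : S => A.transpose s.val)

/-- The matrix `[A | x]` obtained from `A` by appending the column `x`. -/
def appendCol {F : Type*} [Field F] {r n : ℕ}
    (A : Matrix (Fin r) (Fin n) F) (x : Fin r → F) :
    Matrix (Fin r) (Fin (n + 1)) F :=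
  Matrix.of fun i => Fin.snoc (A i) (x i)

instance : Fact (Nat.Prime 3) := ⟨by norm_num⟩
instance : Fact (Nat.Prime 5) := ⟨by norm_num⟩

lemma indep_triple_iff {F : Type*} [Field F] {n : ℕ} (A : Matrix (Fin 3) (Fin n) F)
    (a b c : Fin n) (hab : a ≠ b) (hac : a ≠ c) (hbc : b ≠ c) :
    Indep A {a, b, c} ↔ (Matrix.of ![A.transpose a, A.transpose b, A.transpose c]).det ≠ 0 := by
  have hfa : a ∈ ({a, b, c} : Set (Fin n)) := by simp
  have hfb : b ∈ ({a, b, c} : Set (Fin n)) := by simp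
  have hfc : c ∈ ({a, b, c} : Set (Fin n)) := by simp
  let f : Fin 3 → ({a, b, c} : Set (Fin n)) := ![⟨a, hfa⟩, ⟨b, hfb⟩, ⟨c, hfc⟩]
  have hinj : Function.Injective f := by
    intro i j hij
    fin_cases i <;> fin_cases j <;> simp_all [f]
  have hsurj : Function.Surjective f := by
    rintro ⟨x, hx⟩
    rcases hx with h | h | h
    · exact ⟨0, by simp [f, h]⟩
    · exact ⟨1, by simp [f, h]⟩
    · exact ⟨2, by simp at h; simp [f, h]⟩
  let e : Fin 3 ≃ ({a, b, c} : Set (Fin n)) := Equiv.ofBijective f ⟨hinj, hsurj⟩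
  have h1 : Indep A {a, b, c} ↔
      LinearIndependent F ((fun s : ({a,b,c} : Set (Fin n)) => A.transpose s.val) ∘ e) :=
    (linearIndependent_equiv e).symm
  have h2 : ((fun s : ({a,b,c} : Set (Fin n)) => A.transpose s.val) ∘ e) =
      fun i => (Matrix.of ![A.transpose a, A.transpose b, A.transpose c]) i := by
    funext i
    fin_cases i <;> simp [e, Equiv.ofBijective, f] <;> rfl
  rw [h1, h2]
  exact Matrix.linearIndependent_rows_iff_isUnit.trans (by rw [Matrix.isUnit_iff_isUnit_det,
    isUnit_iff_ne_zero])

def det3 (x y z : Fin 3 → ZMod 3) : ZMod 3 :=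
  x 0 * (y 1 * z 2 - y 2 * z 1) - x 1 * (y 0 * z 2 - y 2 * z 0) + x 2 * (y 0 * z 1 - y 1 * z 0)

lemma det3_eq (x y z : Fin 3 → ZMod 3) : (Matrix.of ![x, y, z]).det = det3 x y z := by
  simp [Matrix.det_fin_three, det3]; ring

lemma rows_mul {F : Type*} [CommRing F] (x y z : Fin 3 → F) (P : Matrix (Fin 3) (Fin 3) F) :
    Matrix.of ![x, y, z] * P =
      Matrix.of ![Matrix.vecMul x P, Matrix.vecMul y P, Matrix.vecMul z P] := by
  ext i j
  fin_cases i <;> simp [Matrix.mul_apply, Matrix.vecMul, dotProduct]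

set_option maxHeartbeats 4000000 in
lemma key : ∀ A B C : Fin 3 → ZMod 3,
    det3 ![1,0,0] ![0,1,0] A = 0 →
    det3 ![0,1,0] ![0,0,1] B = 0 →
    det3 ![0,1,0] ![0,0,1] A ≠ 0 →
    det3 ![1,0,0] ![0,0,1] A ≠ 0 →
    det3 ![1,0,0] ![0,0,1] B ≠ 0 →
    det3 ![1,0,0] ![0,1,0] B ≠ 0 →
    det3 ![1,0,0] ![0,1,0] C ≠ 0 →
    det3 ![1,0,0] ![0,0,1] C ≠ 0 →
    det3 ![0,1,0] ![0,0,1] C ≠ 0 →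
    det3 ![1,0,0] B C ≠ 0 →
    det3 ![0,0,1] A C ≠ 0 →
    det3 A B C ≠ 0 → False := by decide

/-- The matroid `Q₆` is not representable over `GF(3)`. -/
theorem Q6_not_representable_GF3 :
    let B₁ : Matrix (Fin 3) (Fin 6) (ZMod 5) :=
      !![1,0,0,1,0,1; 0,1,0,1,1,3; 0,0,1,0,1,1]
    ¬ ∃ (M : Matrix (Fin 3) (Fin 6) (ZMod 3)) (σ : Fin 6 ≃ Fin 6),
        ∀ S : Set (Fin 6), Indep M S ↔ Indep B₁ (σ '' S) := by
  intro B₁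
  rintro ⟨M, σ, h⟩
  set v : Fin 6 → (Fin 3 → ZMod 3) := fun i => M.transpose (σ.symm i) with hv
  have key_transfer : ∀ a b c : Fin 6, a ≠ b → a ≠ c → b ≠ c →
      ((Matrix.of ![v a, v b, v c]).det ≠ 0 ↔
       (Matrix.of ![B₁.transpose a, B₁.transpose b, B₁.transpose c]).det ≠ 0) := by
    intro a b c hab hac hbc
    have h1 := indep_triple_iff M (σ.symm a) (σ.symm b) (σ.symm c)
      (by simpa using hab) (by simpa using hac) (by simpa using hbc)
    have h2 := indep_triple_iff B₁ a b c hab hac hbc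
    have h3 := h {σ.symm a, σ.symm b, σ.symm c}
    have h4 : σ '' {σ.symm a, σ.symm b, σ.symm c} = {a, b, c} := by
      simp [Set.image_insert_eq]
    rw [h4] at h3
    rw [← h1, h3, h2]
  -- facts about v triples
  have f012 : (Matrix.of ![v 0, v 1, v 2]).det ≠ 0 := by
    refine (key_transfer 0 1 2 (by decide) (by decide) (by decide)).2 ?_
    decide
  -- invertible P
  set P : Matrix (Fin 3) (Fin 3) (ZMod 3) := Matrix.of ![v 0, v 1, v 2] with hP
  have hPdet : P.det ≠ 0 := f012
  have hPunit : IsUnit P.det := isUnit_iff_ne_zero.mpr hPdet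
  set A : Fin 3 → ZMod 3 := Matrix.vecMul (v 3) P⁻¹ with hA
  set B : Fin 3 → ZMod 3 := Matrix.vecMul (v 4) P⁻¹ with hB
  set C : Fin 3 → ZMod 3 := Matrix.vecMul (v 5) P⁻¹ with hC
  have hvm : ∀ x : Fin 3 → ZMod 3, Matrix.vecMul (Matrix.vecMul x P⁻¹) P = x := by
    intro x
    rw [Matrix.vecMul_vecMul, Matrix.nonsing_inv_mul P hPunit, Matrix.vecMul_one]
  have hv3 : v 3 = Matrix.vecMul A P := (hvm (v 3)).symm
  have hv4 : v 4 = Matrix.vecMul B P := (hvm (v 4)).symm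
  have hv5 : v 5 = Matrix.vecMul C P := (hvm (v 5)).symm
  have he0 : v 0 = Matrix.vecMul ![1,0,0] P := by
    funext j
    simp [Matrix.vecMul, dotProduct, Fin.sum_univ_three, hP]
  have he1 : v 1 = Matrix.vecMul ![0,1,0] P := by
    funext j
    simp [Matrix.vecMul, dotProduct, Fin.sum_univ_three, hP]
  have he2 : v 2 = Matrix.vecMul ![0,0,1] P := by
    funext j
    simp [Matrix.vecMul, dotProduct, Fin.sum_univ_three, hP]
  have hdet : ∀ x y z : Fin 3 → ZMod 3,
      (Matrix.of ![Matrix.vecMul x P, Matrix.vecMul y P, Matrix.vecMul z P]).det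
        = det3 x y z * P.det := by
    intro x y z
    rw [← rows_mul, Matrix.det_mul, det3_eq]
  -- generic extractors
  have fact_ne : ∀ (a b c : Fin 6) (x y z : Fin 3 → ZMod 3), a ≠ b → a ≠ c → b ≠ c →
      v a = Matrix.vecMul x P → v b = Matrix.vecMul y P → v c = Matrix.vecMul z P →
      (Matrix.of ![B₁.transpose a, B₁.transpose b, B₁.transpose c]).det ≠ 0 →
      det3 x y z ≠ 0 := by
    intro a b c x y z hab hac hbc ha hb hc hne
    have := (key_transfer a b c hab hac hbc).2 hne
    rw [ha, hb, hc, hdet] at this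
    exact left_ne_zero_of_mul this
  have fact_eq : ∀ (a b c : Fin 6) (x y z : Fin 3 → ZMod 3), a ≠ b → a ≠ c → b ≠ c →
      v a = Matrix.vecMul x P → v b = Matrix.vecMul y P → v c = Matrix.vecMul z P →
      (Matrix.of ![B₁.transpose a, B₁.transpose b, B₁.transpose c]).det = 0 →
      det3 x y z = 0 := by
    intro a b c x y z hab hac hbc ha hb hc heq
    have h0 : ¬ (Matrix.of ![v a, v b, v c]).det ≠ 0 := by
      intro hcon
      exact ((key_transfer a b c hab hac hbc).1 hcon) heq
    have h0' : (Matrix.of ![v a, v b, v c]).det = 0 := not_not.mp h0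
    rw [ha, hb, hc, hdet] at h0'
    rcases mul_eq_zero.mp h0' with h' | h'
    · exact h'
    · exact absurd h' hPdet
  refine key A B C ?_ ?_ ?_ ?_ ?_ ?_ ?_ ?_ ?_ ?_ ?_ ?_
  · exact fact_eq 0 1 3 ![1,0,0] ![0,1,0] A (by decide) (by decide) (by decide)
      he0 he1 hv3 (by decide)
  · exact fact_eq 1 2 4 ![0,1,0] ![0,0,1] B (by decide) (by decide) (by decide)
      he1 he2 hv4 (by decide)
  · exact fact_ne 1 2 3 ![0,1,0] ![0,0,1] A (by decide) (by decide) (by decide)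
      he1 he2 hv3 (by decide)
  · exact fact_ne 0 2 3 ![1,0,0] ![0,0,1] A (by decide) (by decide) (by decide)
      he0 he2 hv3 (by decide)
  · exact fact_ne 0 2 4 ![1,0,0] ![0,0,1] B (by decide) (by decide) (by decide)
      he0 he2 hv4 (by decide)
  · exact fact_ne 0 1 4 ![1,0,0] ![0,1,0] B (by decide) (by decide) (by decide)
      he0 he1 hv4 (by decide)
  · exact fact_ne 0 1 5 ![1,0,0] ![0,1,0] C (by decide) (by decide) (by decide)
      he0 he1 hv5 (by decide)
  · exact fact_ne 0 2 5 ![1,0,0] ![0,0,1] C (by decide) (by decide) (by decide)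
      he0 he2 hv5 (by decide)
  · exact fact_ne 1 2 5 ![0,1,0] ![0,0,1] C (by decide) (by decide) (by decide)
      he1 he2 hv5 (by decide)
  · exact fact_ne 0 4 5 ![1,0,0] B C (by decide) (by decide) (by decide)
      he0 hv4 hv5 (by decide)
  · exact fact_ne 2 3 5 ![0,0,1] A C (by decide) (by decide) (by decide)
      he2 hv3 hv5 (by decide)
  · exact fact_ne 3 4 5 A B C (by decide) (by decide) (by decide)
      hv3 hv4 hv5 (by decide)
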